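/- Let V and W be open subsets of Euclidean space ℝ³, let p ∈ V, let ξ be a 2-dimensional linear subspace of ℝ³, and let h : V → W be a C¹-diffeomorphism (h is a bijection from V to W, continuously differentiable on V, with invertible derivative Dh_p at p). Write π for the orthogonal projection of ℝ³ onto the orthogonal complement ξ^⊥, and π' for the orthogonal projection of ℝ³ onto the orthogonal complement of the 2-plane Dh_p(ξ). Then for every ε with 0 < ε < π/2 there exists δ with 0 < δ < π/2 such that for any two distinct points p', p'' ∈ V with dist(p,p') < δ, dist(p,p'') < δ and ‖π(p'' − p')‖ < sin(δ)·‖p'' − p'‖, one has ‖π'(h(p'') − h(p'))‖ < sin(ε)·‖h(p'') − h(p')‖. -/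

import Mathlib

set_option maxHeartbeats 1000000


/-- Independence of the Legendrian condition of the choice of `C¹` Euclidean coordinates:
if `h : V → W` is a `C¹`-diffeomorphism with derivative `Dh` at `p`, `ξ` is a 2-plane, and
`π`, `π'` are the orthogonal projections onto `ξᗮ` and `(Dh p ξ)ᗮ`, then for every
`ε ∈ (0, π/2)` there is `δ ∈ (0, π/2)` such that near-`ξ`-tangent chords near `p` are mapped
to near-`Dh(ξ)`-tangent chords. -/
theorem angle_condition_coordinate_invariance
    (V W : Set (EuclideanSpace ℝ (Fin 3))) (hV : IsOpen V) (hW : IsOpen W)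
    (p : EuclideanSpace ℝ (Fin 3)) (hp : p ∈ V)
    (ξ : Submodule ℝ (EuclideanSpace ℝ (Fin 3))) (hξ : Module.finrank ℝ ξ = 2)
    (h : EuclideanSpace ℝ (Fin 3) → EuclideanSpace ℝ (Fin 3))
    (hbij : Set.BijOn h V W) (hC1 : ContDiffOn ℝ 1 h V)
    (Dh : EuclideanSpace ℝ (Fin 3) ≃L[ℝ] EuclideanSpace ℝ (Fin 3))
    (hDh : HasFDerivAt h (Dh : EuclideanSpace ℝ (Fin 3) →L[ℝ] EuclideanSpace ℝ (Fin 3)) p) :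
    ∀ ε : ℝ, 0 < ε → ε < Real.pi / 2 → ∃ δ : ℝ, 0 < δ ∧ δ < Real.pi / 2 ∧
      ∀ p' ∈ V, ∀ p'' ∈ V, p' ≠ p'' → dist p p' < δ → dist p p'' < δ →
        ‖(Submodule.orthogonalProjectionOnto ξᗮ (p'' - p') : EuclideanSpace ℝ (Fin 3))‖ <
          Real.sin δ * ‖p'' - p'‖ →
        ‖(Submodule.orthogonalProjectionOnto
            (Submodule.map ((Dh : EuclideanSpace ℝ (Fin 3) →L[ℝ] EuclideanSpace ℝ (Fin 3)) :
              EuclideanSpace ℝ (Fin 3) →ₗ[ℝ] EuclideanSpace ℝ (Fin 3)) ξ)ᗮ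
            (h p'' - h p') : EuclideanSpace ℝ (Fin 3))‖ <
          Real.sin ε * ‖h p'' - h p'‖ := by
  intro ε hε hεpi
  set D : EuclideanSpace ℝ (Fin 3) →L[ℝ] EuclideanSpace ℝ (Fin 3) :=
    (Dh : EuclideanSpace ℝ (Fin 3) →L[ℝ] EuclideanSpace ℝ (Fin 3)) with hDdef
  set K : Submodule ℝ (EuclideanSpace ℝ (Fin 3)) := Submodule.map (D : EuclideanSpace ℝ (Fin 3) →ₗ[ℝ] EuclideanSpace ℝ (Fin 3)) ξ with hKdef
  have hsε : 0 < Real.sin ε :=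
    Real.sin_pos_of_pos_of_lt_pi hε (by linarith [Real.pi_pos])
  have hsε1 : Real.sin ε ≤ 1 := Real.sin_le_one ε
  set N := ‖(Dh.symm : EuclideanSpace ℝ (Fin 3) →L[ℝ] EuclideanSpace ℝ (Fin 3))‖ with hNdef
  have hN : 0 < N := by
    have hne : (Dh.symm : EuclideanSpace ℝ (Fin 3) →L[ℝ] EuclideanSpace ℝ (Fin 3)) ≠ 0 := by
      intro h0
      have h1 : (Dh.symm : EuclideanSpace ℝ (Fin 3) →L[ℝ] EuclideanSpace ℝ (Fin 3))
          (Dh (EuclideanSpace.single 0 1)) = 0 := by rw [h0]; rfl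
      simp only [ContinuousLinearEquiv.coe_coe, ContinuousLinearEquiv.symm_apply_apply] at h1
      have := congrArg (fun f => f 0) h1
      simp at this
    exact norm_pos_iff.mpr hne
  set M := ‖D‖ with hMdef
  have hM : 0 ≤ M := norm_nonneg _
  set η := Real.sin ε / (8 * N) with hηdef
  have hη : 0 < η := by positivity
  have hNη : N * η = Real.sin ε / 8 := by
    rw [hηdef]; field_simp
  -- strict differentiability at p, from C¹ on the open set V
  have hstrict : HasStrictFDerivAt h D p :=
    (hC1.contDiffAt (hV.mem_nhds hp)).hasStrictFDerivAt' hDh one_ne_zero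
  have hlo := hstrict.isLittleO.def hη
  rw [Metric.eventually_nhds_iff] at hlo
  obtain ⟨r, hr, hball⟩ := hlo
  -- choice of δ
  set δ := min (min ε r) (Real.sin ε / (8 * N * (M + 1))) with hδdef
  have hδ0 : 0 < δ := lt_min (lt_min hε hr) (by positivity)
  have hδε : δ ≤ ε := (min_le_left _ _).trans (min_le_left _ _)
  have hδr : δ ≤ r := (min_le_left _ _).trans (min_le_right _ _)
  have hδc : δ ≤ Real.sin ε / (8 * N * (M + 1)) := min_le_right _ _
  refine ⟨δ, hδ0, lt_of_le_of_lt hδε hεpi, ?_⟩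
  intro p' hp' p'' hp'' hne hd' hd'' hproj
  set v := p'' - p' with hvdef
  have hv0 : v ≠ 0 := sub_ne_zero.mpr (Ne.symm hne)
  have hvpos : 0 < ‖v‖ := norm_pos_iff.mpr hv0
  set w := h p'' - h p' with hwdef
  -- error estimate
  have hE : ‖w - D v‖ ≤ η * ‖v‖ := by
    have hdist : dist (p'', p') (p, p) < r := by
      rw [Prod.dist_eq]
      exact max_lt (lt_of_lt_of_le (by rwa [dist_comm]) hδr)
        (lt_of_lt_of_le (by rwa [dist_comm]) hδr)
    have := hball hdist
    simpa [hwdef, hvdef] using this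
  -- lower bound for ‖w‖
  have hDvN : ‖v‖ ≤ N * ‖D v‖ := by
    have h1 : ‖(Dh.symm : EuclideanSpace ℝ (Fin 3) →L[ℝ] EuclideanSpace ℝ (Fin 3)) (D v)‖
        ≤ N * ‖D v‖ := ContinuousLinearMap.le_opNorm _ _
    have h2 : (Dh.symm : EuclideanSpace ℝ (Fin 3) →L[ℝ] EuclideanSpace ℝ (Fin 3)) (D v) = v :=
      Dh.symm_apply_apply v
    rwa [h2] at h1
  have hDvw : ‖D v‖ ≤ ‖w‖ + ‖w - D v‖ := by
    have he : w - (w - D v) = D v := sub_sub_cancel _ _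
    calc ‖D v‖ = ‖w - (w - D v)‖ := by rw [he]
    _ ≤ ‖w‖ + ‖w - D v‖ := norm_sub_le _ _
  have hw_low : ‖v‖ * (7 / 8) ≤ N * ‖w‖ := by
    nlinarith [norm_nonneg w, norm_nonneg (w - D v), norm_nonneg (D v)]
  -- the projection onto Kᗮ is norm-nonincreasing
  have hproj_le : ∀ x : EuclideanSpace ℝ (Fin 3),
      ‖(Submodule.orthogonalProjectionOnto Kᗮ x : EuclideanSpace ℝ (Fin 3))‖ ≤ ‖x‖ := fun x => by
    calc ‖(Submodule.orthogonalProjectionOnto Kᗮ x : EuclideanSpace ℝ (Fin 3))‖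
        = ‖Submodule.orthogonalProjectionOnto Kᗮ x‖ := rfl
      _ ≤ ‖Submodule.orthogonalProjectionOnto Kᗮ‖ * ‖x‖ := (Submodule.orthogonalProjectionOnto Kᗮ).le_opNorm x
      _ ≤ 1 * ‖x‖ := mul_le_mul_of_nonneg_right (Submodule.orthogonalProjectionOnto_norm_le Kᗮ) (norm_nonneg x)
      _ = ‖x‖ := one_mul _
  -- decompose v relative to ξ
  set b : EuclideanSpace ℝ (Fin 3) := (Submodule.orthogonalProjectionOnto ξᗮ v : EuclideanSpace ℝ (Fin 3))
    with hbdef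
  have hvb : v - b ∈ ξ := by
    have hsum := ξ.starProjection_add_starProjection_orthogonal v
    have heq : v - b = (Submodule.orthogonalProjectionOnto ξ v : EuclideanSpace ℝ (Fin 3)) :=
      (eq_sub_of_add_eq hsum).symm
    rw [heq]; exact (Submodule.orthogonalProjectionOnto ξ v).2
  have hDvb : D v - D b ∈ K := ⟨v - b, hvb, by rw [map_sub]; rfl⟩
  have hPK0 : Submodule.orthogonalProjectionOnto Kᗮ (D v - D b) = 0 :=
    Submodule.orthogonalProjectionOnto_orthogonal_apply_eq_zero hDvb
  have hPeq : Submodule.orthogonalProjectionOnto Kᗮ (D v) = Submodule.orthogonalProjectionOnto Kᗮ (D b) := by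
    have := map_sub (Submodule.orthogonalProjectionOnto Kᗮ) (D v) (D b)
    rw [hPK0] at this
    exact sub_eq_zero.mp this.symm
  -- upper bound for the projection of w
  have hMδη : M * Real.sin δ ≤ η := by
    have hsδ : Real.sin δ ≤ δ := Real.sin_le hδ0.le
    have h1 : M * Real.sin δ ≤ M * (Real.sin ε / (8 * N * (M + 1))) := by
      apply mul_le_mul_of_nonneg_left (hsδ.trans hδc) hM
    refine h1.trans ?_
    rw [hηdef, mul_div_assoc', div_le_div_iff₀ (by positivity) (by positivity)]
    nlinarith
  have hup : ‖(Submodule.orthogonalProjectionOnto Kᗮ w : EuclideanSpace ℝ (Fin 3))‖ ≤ 2 * η * ‖v‖ := by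
    have hsplit : Submodule.orthogonalProjectionOnto Kᗮ w
        = Submodule.orthogonalProjectionOnto Kᗮ (D b) + Submodule.orthogonalProjectionOnto Kᗮ (w - D v) := by
      rw [← hPeq, ← map_add]
      congr 1
      abel
    have h1 : ‖(Submodule.orthogonalProjectionOnto Kᗮ w : EuclideanSpace ℝ (Fin 3))‖
        ≤ ‖(Submodule.orthogonalProjectionOnto Kᗮ (D b) : EuclideanSpace ℝ (Fin 3))‖
          + ‖(Submodule.orthogonalProjectionOnto Kᗮ (w - D v) : EuclideanSpace ℝ (Fin 3))‖ := by
      rw [hsplit]; push_cast; exact norm_add_le _ _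
    have h2 : ‖(Submodule.orthogonalProjectionOnto Kᗮ (D b) : EuclideanSpace ℝ (Fin 3))‖ ≤ M * ‖b‖ :=
      (hproj_le _).trans (D.le_opNorm b)
    have h3 : ‖(Submodule.orthogonalProjectionOnto Kᗮ (w - D v) : EuclideanSpace ℝ (Fin 3))‖ ≤ η * ‖v‖ :=
      (hproj_le _).trans hE
    have hb : ‖b‖ < Real.sin δ * ‖v‖ := hproj
    nlinarith [norm_nonneg b]
  -- conclusion
  have hfinal : 2 * η * ‖v‖ < Real.sin ε * ‖w‖ := by
    have hsε8 : Real.sin ε = 8 * N * η := by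
      rw [hηdef]; field_simp
    have hwpos : 0 ≤ ‖w‖ := norm_nonneg w
    nlinarith
  exact lt_of_le_of_lt hup hfinal
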